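/- arXiv:1905.05703 — 3 statements merged into one kernel-verified Lean document; each statement's English description precedes it below -/
import Mathlib

section
/- For every positive constant L there exist constants 0 < c < κ < 1 such that for all L-Lipschitz functions δ : ℝ^n → (0, ∞) and all L-Lipschitz functions ξ : ℝ^(n-1) → ℝ the following inclusions hold: V_{cδ}(Γ_ξ) ⊆ { (x̃, x_n) : |x_n − ξ(x̃)| ≤ κ·σ(x̃) } ⊆ V_{δ}(Γ_ξ), where σ(x̃) := δ(x̃, ξ(x̃)). -/
open Metric

noncomputable def mkPt {m : ℕ} (x : EuclideanSpace ℝ (Fin m)) (t : ℝ) :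
    WithLp 2 (EuclideanSpace ℝ (Fin m) × ℝ) :=
  (WithLp.equiv 2 (EuclideanSpace ℝ (Fin m) × ℝ)).symm (x, t)

noncomputable def proj {m : ℕ} (p : WithLp 2 (EuclideanSpace ℝ (Fin m) × ℝ)) :
    EuclideanSpace ℝ (Fin m) × ℝ :=
  WithLp.equiv 2 (EuclideanSpace ℝ (Fin m) × ℝ) p

noncomputable def graphOf {m : ℕ} (ξ : EuclideanSpace ℝ (Fin m) → ℝ) :
    Set (WithLp 2 (EuclideanSpace ℝ (Fin m) × ℝ)) :=
  {p | ∃ x, p = mkPt x (ξ x)}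

lemma dist_mkPt {m : ℕ} (x y : EuclideanSpace ℝ (Fin m)) (s t : ℝ) :
    dist (mkPt x s) (mkPt y t) = Real.sqrt (dist x y ^ 2 + dist s t ^ 2) :=
  WithLp.prod_dist_eq_of_L2 _ _

lemma mkPt_proj {m : ℕ} (p : WithLp 2 (EuclideanSpace ℝ (Fin m) × ℝ)) :
    mkPt (proj p).1 (proj p).2 = p := rfl

lemma dist_mkPt_self {m : ℕ} (x : EuclideanSpace ℝ (Fin m)) (s t : ℝ) :
    dist (mkPt x s) (mkPt x t) = |s - t| := by
  rw [dist_mkPt, dist_self]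
  simp [Real.dist_eq, Real.sqrt_sq_eq_abs]

lemma key_ineq {m : ℕ} {L' : ℝ} (hL : 0 ≤ L') {ξ : EuclideanSpace ℝ (Fin m) → ℝ}
    (hξ : ∀ a b, |ξ a - ξ b| ≤ L' * dist a b)
    (x y : EuclideanSpace ℝ (Fin m)) (t : ℝ) :
    |t - ξ x| ≤ Real.sqrt (1 + L' ^ 2) * dist (mkPt x t) (mkPt y (ξ y)) := by
  set u := dist x y with hu
  set v := dist t (ξ y) with hv
  have hu0 : 0 ≤ u := dist_nonneg
  have hv0 : 0 ≤ v := dist_nonneg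
  have h1 : |t - ξ x| ≤ v + L' * u := by
    have := hξ y x
    have htv : |t - ξ y| = v := by rw [hv, Real.dist_eq]
    calc |t - ξ x| ≤ |t - ξ y| + |ξ y - ξ x| := by
          have := abs_sub_abs_le_abs_sub (t - ξ x) (t - ξ y)
          calc |t - ξ x| = |(t - ξ y) + (ξ y - ξ x)| := by ring_nf
            _ ≤ |t - ξ y| + |ξ y - ξ x| := abs_add_le _ _
      _ ≤ v + L' * u := by
          rw [htv]
          have := hξ y x
          rw [dist_comm y x] at this
          linarith
  have h2 : v + L' * u ≤ Real.sqrt (1 + L' ^ 2) * Real.sqrt (u ^ 2 + v ^ 2) := by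
    rw [← Real.sqrt_mul (by positivity)]
    refine (Real.le_sqrt (by positivity) (by positivity)).mpr ?_
    nlinarith [sq_nonneg (L' * v - u), sq_nonneg (v - L' * u)]
  rw [dist_mkPt]
  linarith

theorem stmt2 {m : ℕ} (L : NNReal) (hL : 0 < L) :
    ∃ c κ : ℝ, 0 < c ∧ c < κ ∧ κ < 1 ∧
      ∀ (δ : WithLp 2 (EuclideanSpace ℝ (Fin m) × ℝ) → ℝ)
        (ξ : EuclideanSpace ℝ (Fin m) → ℝ),
        LipschitzWith L δ → (∀ p, 0 < δ p) → LipschitzWith L ξ →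
        ({p | infDist p (graphOf ξ) < c * δ p} ⊆
            {p | |(proj p).2 - ξ (proj p).1| ≤ κ * δ (mkPt (proj p).1 (ξ (proj p).1))}) ∧
        ({p | |(proj p).2 - ξ (proj p).1| ≤ κ * δ (mkPt (proj p).1 (ξ (proj p).1))} ⊆
            {p | infDist p (graphOf ξ) < δ p}) := by
  set L' : ℝ := (L : ℝ) with hL'def
  have hL' : 0 < L' := hL
  set M : ℝ := Real.sqrt (1 + L' ^ 2) with hMdef
  have hM1 : 1 ≤ M :=
    (Real.le_sqrt zero_le_one (by positivity)).mpr (by nlinarith)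
  have hM0 : 0 < M := lt_of_lt_of_le one_pos hM1
  set κ : ℝ := 1 / (2 * (1 + L')) with hκdef
  have hκ0 : 0 < κ := by positivity
  have hκL : κ * (1 + L') = 1 / 2 := by
    rw [hκdef]; field_simp
  have hκ1 : κ < 1 := by
    rw [hκdef]
    rw [div_lt_one (by positivity)]
    nlinarith
  set c : ℝ := κ / (M * (1 + κ * L')) with hcdef
  have hden : 1 < M * (1 + κ * L') := by nlinarith
  have hc0 : 0 < c := by
    rw [hcdef]; positivity
  have hcκ : c < κ := by
    rw [hcdef]
    calc κ / (M * (1 + κ * L')) < κ / 1 := by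
          apply div_lt_div_of_pos_left hκ0 one_pos hden
      _ = κ := div_one κ
  have hcM : c * M = κ / (1 + κ * L') := by
    rw [hcdef]
    field_simp
  refine ⟨c, κ, hc0, hcκ, hκ1, ?_⟩
  intro δ ξ hδ hδpos hξ
  have hξ' : ∀ a b, |ξ a - ξ b| ≤ L' * dist a b := by
    intro a b
    have := hξ.dist_le_mul a b
    rwa [Real.dist_eq] at this
  have hΓne : (graphOf ξ).Nonempty := ⟨mkPt 0 (ξ 0), 0, rfl⟩
  constructor
  · intro p hp
    simp only [Set.mem_setOf_eq] at hp ⊢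
    set x := (proj p).1
    set t := (proj p).2
    set σ := δ (mkPt x (ξ x)) with hσdef
    have hσ0 : 0 < σ := hδpos _
    obtain ⟨q, hqΓ, hqd⟩ := (infDist_lt_iff hΓne).mp hp
    obtain ⟨y, rfl⟩ := hqΓ
    have hkey : |t - ξ x| ≤ M * dist p (mkPt y (ξ y)) := by
      have := key_ineq hL'.le hξ' x y t
      rwa [mkPt_proj p] at this
    set a := |t - ξ x| with hadef
    have ha0 : 0 ≤ a := abs_nonneg _
    have hδp : δ p ≤ σ + L' * a := by
      have := hδ.dist_le_mul p (mkPt x (ξ x))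
      rw [Real.dist_eq] at this
      have hd : dist p (mkPt x (ξ x)) = a := by
        conv_lhs => rw [← mkPt_proj p]
        rw [dist_mkPt_self]
      rw [hd] at this
      have := abs_le.mp this
      linarith [this.2]
    have h1 : a < M * (c * δ p) := by
      calc a ≤ M * dist p (mkPt y (ξ y)) := hkey
        _ < M * (c * δ p) := by
            apply mul_lt_mul_of_pos_left hqd hM0
    have h2 : a < (κ / (1 + κ * L')) * (σ + L' * a) := by
      calc a < M * (c * δ p) := h1
        _ = (c * M) * δ p := by ring
        _ = (κ / (1 + κ * L')) * δ p := by rw [hcM]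
        _ ≤ (κ / (1 + κ * L')) * (σ + L' * a) := by
            apply mul_le_mul_of_nonneg_left hδp (by positivity)
    have hpos : 0 < 1 + κ * L' := by positivity
    have h3 : a * (1 + κ * L') < κ * (σ + L' * a) := by
      have := (div_mul_eq_mul_div κ (1 + κ * L') (σ + L' * a)) ▸ h2
      calc a * (1 + κ * L') = ((κ * (σ + L' * a)) / (1 + κ * L')) * (1 + κ * L') -
              ((κ / (1 + κ * L')) * (σ + L' * a) - a) * (1 + κ * L') := by
            field_simp; ring
        _ < κ * (σ + L' * a) := by
            have hgap : 0 < (κ / (1 + κ * L')) * (σ + L' * a) - a := by linarith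
            have : ((κ * (σ + L' * a)) / (1 + κ * L')) * (1 + κ * L') = κ * (σ + L' * a) := by
              field_simp
            nlinarith
    nlinarith
  · intro p hp
    simp only [Set.mem_setOf_eq] at hp ⊢
    set x := (proj p).1
    set t := (proj p).2
    set σ := δ (mkPt x (ξ x)) with hσdef
    have hσ0 : 0 < σ := hδpos _
    set a := |t - ξ x| with hadef
    have ha0 : 0 ≤ a := abs_nonneg _
    have hd : dist p (mkPt x (ξ x)) = a := by
      conv_lhs => rw [← mkPt_proj p]
      rw [dist_mkPt_self]
    have hmem : mkPt x (ξ x) ∈ graphOf ξ := ⟨x, rfl⟩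
    have h1 : infDist p (graphOf ξ) ≤ a := hd ▸ infDist_le_dist_of_mem hmem
    have hδp : σ - L' * a ≤ δ p := by
      have := hδ.dist_le_mul p (mkPt x (ξ x))
      rw [Real.dist_eq, hd] at this
      have := abs_le.mp this
      linarith [this.1]
    have hLκ : L' * κ < 1 - κ := by nlinarith
    have : a < σ - L' * a := by nlinarith
    linarith
end

section
/- Define φ : (0,1) × ℝ → ℝ by φ(δ, y) = θ(y/δ)·(δ/(1 + y²)) + (1 − θ(y/δ))·y, where θ : ℝ → [0,1] is a C¹ piecewise-polynomial function with θ(y) = 1 for y ≤ 0 and θ(y) = 0 for y ≥ 1. Then φ is a Lipschitz function on (0,1) × ℝ, i.e. |dφ| is bounded. -/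
open Set

theorem stmt8 (θ : ℝ → ℝ) (hθ : ContDiff ℝ 1 θ)
    (hrange : ∀ x, θ x ∈ Set.Icc (0 : ℝ) 1)
    (h1 : ∀ x ≤ (0 : ℝ), θ x = 1) (h0 : ∀ x ≥ (1 : ℝ), θ x = 0)
    (hB : ∃ B : ℝ, ∀ x, |deriv θ x| ≤ B) :
    ∃ K : NNReal, LipschitzOnWith K
      (fun p : ℝ × ℝ => θ (p.2 / p.1) * (p.1 / (1 + p.2 ^ 2)) + (1 - θ (p.2 / p.1)) * p.2)
      (Set.Ioo (0 : ℝ) 1 ×ˢ Set.univ) := by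
  obtain ⟨B, hBx⟩ := hB
  have hB0 : (0:ℝ) ≤ B := le_trans (abs_nonneg _) (hBx 0)
  have hθd : Differentiable ℝ θ := hθ.differentiable one_ne_zero
  have hdz : ∀ x : ℝ, x < 0 ∨ 1 < x → deriv θ x = 0 := by
    intro x hx
    rcases hx with hx | hx
    · have h : θ =ᶠ[nhds x] fun _ => (1:ℝ) :=
        Filter.eventuallyEq_of_mem (Iio_mem_nhds hx) fun y hy => h1 y (le_of_lt hy)
      rw [h.deriv_eq]; exact deriv_const x 1
    · have h : θ =ᶠ[nhds x] fun _ => (0:ℝ) :=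
        Filter.eventuallyEq_of_mem (Ioi_mem_nhds hx) fun y hy => h0 y (le_of_lt hy)
      rw [h.deriv_eq]; exact deriv_const x 0
  have hsupp : ∀ {δ y : ℝ}, 0 < δ → deriv θ (y/δ) ≠ 0 → 0 ≤ y ∧ y ≤ δ := by
    intro δ y hδ hne
    by_contra hc
    push_neg at hc
    apply hne
    rcases lt_or_ge y 0 with h | h
    · exact hdz _ (Or.inl (div_neg_of_neg_of_pos h hδ))
    · exact hdz _ (Or.inr ((one_lt_div hδ).2 (hc h)))
  have hdiffb : ∀ {δ y : ℝ}, 0 < δ → 0 ≤ y → y ≤ δ → |δ/(1+y^2) - y| ≤ δ := by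
    intro δ y hδ h0y hyδ
    have h2 : δ/(1+y^2) ≤ δ := div_le_self hδ.le (by nlinarith)
    have h3 : 0 ≤ δ/(1+y^2) := by positivity
    rw [abs_le]; constructor <;> linarith
  have h2y : ∀ y : ℝ, |(2*y)/((1+y^2)^2)| ≤ 1 := by
    intro y
    rw [abs_div, div_le_one (by positivity)]
    have h := abs_nonneg y
    have h2 : |2*y| = 2*|y| := by rw [abs_mul, abs_two]
    have h3 : |(1+y^2)^2| = (1+y^2)^2 := abs_of_nonneg (by positivity)
    rw [h2, h3]
    nlinarith [sq_abs y, sq_nonneg (|y| - 1), sq_nonneg (y^2)]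
  have hθ1 : ∀ x : ℝ, |θ x| ≤ 1 := fun x =>
    abs_le.2 ⟨by linarith [(hrange x).1], (hrange x).2⟩
  have hθ2 : ∀ x : ℝ, |1 - θ x| ≤ 1 := fun x =>
    abs_le.2 ⟨by linarith [(hrange x).2], by linarith [(hrange x).1]⟩
  -- Lipschitz bound in the second variable
  have Ly : ∀ δ, δ ∈ Ioo (0:ℝ) 1 → ∀ a b : ℝ,
      |(θ (a/δ) * (δ/(1+a^2)) + (1-θ (a/δ))*a) - (θ (b/δ) * (δ/(1+b^2)) + (1-θ (b/δ))*b)|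
        ≤ (B+2) * |a - b| := by
    intro δ hδ a b
    obtain ⟨hδ0, hδ1⟩ := hδ
    have key := convex_univ.norm_image_sub_le_of_norm_hasDerivWithin_le
      (f := fun z : ℝ => θ (z/δ) * (δ/(1+z^2)) + (1-θ (z/δ))*z)
      (f' := fun z : ℝ => (deriv θ (z/δ) * (1/δ)) * (δ/(1+z^2))
          + θ (z/δ) * (δ * (-(2*z)/((1+z^2)^2)))
        + ((0 - deriv θ (z/δ) * (1/δ)) * z + (1 - θ (z/δ)) * 1))
      (C := B + 2) ?_ ?_ (mem_univ b) (mem_univ a)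
    · simpa [Real.norm_eq_abs] using key
    · intro y _
      have hu : HasDerivAt (fun z : ℝ => z/δ) (1/δ) y := (hasDerivAt_id y).div_const δ
      have hθu : HasDerivAt (fun z : ℝ => θ (z/δ)) (deriv θ (y/δ) * (1/δ)) y :=
        (hθd (y/δ)).hasDerivAt.comp y hu
      have hsq : HasDerivAt (fun z : ℝ => 1 + z^2) (2*y) y := by
        simpa using ((hasDerivAt_pow 2 y).const_add 1)
      have hinv : HasDerivAt (fun z : ℝ => (1+z^2)⁻¹) (-(2*y)/((1+y^2)^2)) y :=
        hsq.inv (by positivity)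
      have hc : HasDerivAt (fun z : ℝ => δ/(1+z^2)) (δ * (-(2*y)/((1+y^2)^2))) y := by
        simpa [div_eq_mul_inv] using hinv.const_mul δ
      exact ((hθu.mul hc).add
        (((hasDerivAt_const y (1:ℝ)).sub hθu).mul (hasDerivAt_id y))).hasDerivWithinAt
    · intro y _
      rw [Real.norm_eq_abs]
      have hre : (deriv θ (y/δ) * (1/δ)) * (δ/(1+y^2)) + θ (y/δ) * (δ * (-(2*y)/((1+y^2)^2)))
          + ((0 - deriv θ (y/δ) * (1/δ)) * y + (1 - θ (y/δ)) * 1)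
          = deriv θ (y/δ) * (1/δ) * (δ/(1+y^2) - y)
            + (θ (y/δ) * (δ * (-(2*y)/((1+y^2)^2))) + (1 - θ (y/δ))) := by ring
      beta_reduce
      rw [hre]
      have b1 : |deriv θ (y/δ) * (1/δ) * (δ/(1+y^2) - y)| ≤ B := by
        by_cases hne : deriv θ (y/δ) = 0
        · rw [hne]; simpa using hB0
        · obtain ⟨hy0, hyδ⟩ := hsupp hδ0 hne
          rw [abs_mul, abs_mul]
          have e1 : |1/δ| = 1/δ := abs_of_pos (by positivity)
          rw [e1]
          have hB' := hBx (y/δ)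
          have hdiff' := hdiffb hδ0 hy0 hyδ
          calc |deriv θ (y/δ)| * (1/δ) * |δ/(1+y^2) - y| ≤ B * (1/δ) * δ := by gcongr
            _ = B := by field_simp
      have b2 : |θ (y/δ) * (δ * (-(2*y)/((1+y^2)^2))) + (1 - θ (y/δ))| ≤ 2 := by
        have hδabs : |δ| ≤ 1 := by rw [abs_of_pos hδ0]; exact hδ1.le
        have bb : |θ (y/δ) * (δ * (-(2*y)/((1+y^2)^2)))| ≤ 1 := by
          rw [abs_mul, abs_mul]
          have hneg : |(-(2*y))/((1+y^2)^2)| = |(2*y)/((1+y^2)^2)| := by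
            rw [neg_div, abs_neg]
          have ha1 := hθ1 (y/δ)
          have ha2 := h2y y
          calc |θ (y/δ)| * (|δ| * |(-(2*y))/((1+y^2)^2)|) ≤ 1 * (1 * 1) := by
                rw [hneg]; gcongr
            _ = 1 := by ring
        calc |θ (y/δ) * (δ * (-(2*y)/((1+y^2)^2))) + (1 - θ (y/δ))|
            ≤ |θ (y/δ) * (δ * (-(2*y)/((1+y^2)^2)))| + |1 - θ (y/δ)| := abs_add_le _ _
          _ ≤ 1 + 1 := add_le_add bb (hθ2 _)
          _ = 2 := by norm_num
      calc |deriv θ (y/δ) * (1/δ) * (δ/(1+y^2) - y)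
            + (θ (y/δ) * (δ * (-(2*y)/((1+y^2)^2))) + (1 - θ (y/δ)))|
          ≤ |deriv θ (y/δ) * (1/δ) * (δ/(1+y^2) - y)|
            + |θ (y/δ) * (δ * (-(2*y)/((1+y^2)^2))) + (1 - θ (y/δ))| := abs_add_le _ _
        _ ≤ B + 2 := add_le_add b1 b2
  -- Lipschitz bound in the first variable
  have Lδ : ∀ y : ℝ, ∀ a ∈ Ioo (0:ℝ) 1, ∀ b ∈ Ioo (0:ℝ) 1,
      |(θ (y/a) * (a/(1+y^2)) + (1-θ (y/a))*y) - (θ (y/b) * (b/(1+y^2)) + (1-θ (y/b))*y)|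
        ≤ (B+2) * |a - b| := by
    intro y a ha b hb
    have key := (convex_Ioo (0:ℝ) 1).norm_image_sub_le_of_norm_hasDerivWithin_le
      (f := fun d : ℝ => θ (y/d) * (d/(1+y^2)) + (1-θ (y/d))*y)
      (f' := fun d : ℝ => (deriv θ (y/d) * (y * -((d^2)⁻¹))) * (d/(1+y^2))
          + θ (y/d) * (1/(1+y^2))
        + (0 - deriv θ (y/d) * (y * -((d^2)⁻¹))) * y)
      (C := B + 2) ?_ ?_ hb ha
    · simpa [Real.norm_eq_abs] using key
    · intro d hd
      have hd0 : (0:ℝ) < d := hd.1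
      have hu : HasDerivAt (fun t : ℝ => y/t) (y * -((d^2)⁻¹)) d := by
        simpa [div_eq_mul_inv] using (hasDerivAt_inv hd0.ne').const_mul y
      have hθu : HasDerivAt (fun t : ℝ => θ (y/t)) (deriv θ (y/d) * (y * -((d^2)⁻¹))) d :=
        (hθd (y/d)).hasDerivAt.comp d hu
      have hA : HasDerivAt (fun t : ℝ => t/(1+y^2)) (1/(1+y^2)) d :=
        (hasDerivAt_id d).div_const (1+y^2)
      exact ((hθu.mul hA).add
        (((hasDerivAt_const d (1:ℝ)).sub hθu).mul_const y)).hasDerivWithinAt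
    · intro d hd
      have hd0 : (0:ℝ) < d := hd.1
      rw [Real.norm_eq_abs]
      have hre : (deriv θ (y/d) * (y * -((d^2)⁻¹))) * (d/(1+y^2)) + θ (y/d) * (1/(1+y^2))
          + (0 - deriv θ (y/d) * (y * -((d^2)⁻¹))) * y
          = deriv θ (y/d) * (y * -((d^2)⁻¹)) * (d/(1+y^2) - y)
            + θ (y/d) * (1/(1+y^2)) := by ring
      beta_reduce
      rw [hre]
      have b1 : |deriv θ (y/d) * (y * -((d^2)⁻¹)) * (d/(1+y^2) - y)| ≤ B := by
        by_cases hne : deriv θ (y/d) = 0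
        · rw [hne]; simpa using hB0
        · obtain ⟨hy0, hyd⟩ := hsupp hd0 hne
          rw [abs_mul, abs_mul]
          have e1 : |y * -((d^2)⁻¹)| = y / d^2 := by
            rw [abs_mul, abs_neg, abs_inv, abs_of_nonneg hy0,
              abs_of_nonneg (sq_nonneg d), div_eq_mul_inv]
          rw [e1]
          have hy2 : y / d^2 ≤ 1/d := by
            rw [div_le_div_iff₀ (by positivity) hd0]
            nlinarith
          have hB' := hBx (y/d)
          have hdiff' := hdiffb hd0 hy0 hyd
          calc |deriv θ (y/d)| * (y/d^2) * |d/(1+y^2) - y| ≤ B * (1/d) * d := by gcongr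
            _ = B := by field_simp
      have b2 : |θ (y/d) * (1/(1+y^2))| ≤ 2 := by
        rw [abs_mul]
        have h1' : |1/(1+y^2)| ≤ 1 := by
          rw [abs_of_pos (by positivity)]
          rw [div_le_one (by positivity)]
          nlinarith [sq_nonneg y]
        have ha1 := hθ1 (y/d)
        calc |θ (y/d)| * |1/(1+y^2)| ≤ 1 * 1 := by gcongr
          _ ≤ 2 := by norm_num
      calc |deriv θ (y/d) * (y * -((d^2)⁻¹)) * (d/(1+y^2) - y) + θ (y/d) * (1/(1+y^2))|
          ≤ |deriv θ (y/d) * (y * -((d^2)⁻¹)) * (d/(1+y^2) - y)|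
            + |θ (y/d) * (1/(1+y^2))| := abs_add_le _ _
        _ ≤ B + 2 := add_le_add b1 b2
  -- combine
  refine ⟨⟨2*B+4, by positivity⟩, LipschitzOnWith.of_dist_le_mul ?_⟩
  intro p hp q hq
  have hp1 := (Set.mem_prod.1 hp).1
  have hq1 := (Set.mem_prod.1 hq).1
  have t1 := Ly p.1 hp1 p.2 q.2
  have t2 := Lδ q.2 p.1 hp1 q.1 hq1
  have d2 : |p.2 - q.2| ≤ dist p q := by
    rw [Prod.dist_eq, ← Real.dist_eq]; exact le_max_right _ _
  have d1 : |p.1 - q.1| ≤ dist p q := by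
    rw [Prod.dist_eq, ← Real.dist_eq]; exact le_max_left _ _
  have hdpq : (0:ℝ) ≤ dist p q := dist_nonneg
  show dist _ _ ≤ (2*B+4) * dist p q
  rw [Real.dist_eq]
  have tri : |(θ (p.2/p.1) * (p.1/(1+p.2^2)) + (1-θ (p.2/p.1))*p.2)
      - (θ (q.2/q.1) * (q.1/(1+q.2^2)) + (1-θ (q.2/q.1))*q.2)|
      ≤ |(θ (p.2/p.1) * (p.1/(1+p.2^2)) + (1-θ (p.2/p.1))*p.2)
          - (θ (q.2/p.1) * (p.1/(1+q.2^2)) + (1-θ (q.2/p.1))*q.2)|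
        + |(θ (q.2/p.1) * (p.1/(1+q.2^2)) + (1-θ (q.2/p.1))*q.2)
          - (θ (q.2/q.1) * (q.1/(1+q.2^2)) + (1-θ (q.2/q.1))*q.2)| := abs_sub_le _ _ _
  have e1 : (B+2) * |p.2 - q.2| ≤ (B+2) * dist p q :=
    mul_le_mul_of_nonneg_left d2 (by positivity)
  have e2 : (B+2) * |p.1 - q.1| ≤ (B+2) * dist p q :=
    mul_le_mul_of_nonneg_left d1 (by positivity)
  calc |(θ (p.2/p.1) * (p.1/(1+p.2^2)) + (1-θ (p.2/p.1))*p.2)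
      - (θ (q.2/q.1) * (q.1/(1+q.2^2)) + (1-θ (q.2/q.1))*q.2)|
      ≤ (B+2) * |p.2 - q.2| + (B+2) * |p.1 - q.1| := tri.trans (add_le_add t1 t2)
    _ ≤ (B+2) * dist p q + (B+2) * dist p q := add_le_add e1 e2
    _ = (2*B+4) * dist p q := by ring
end

section
/- Let f : ℝ^n → ℝ be an L_f-Lipschitz function, ξ : ℝ^(n-1) → ℝ an L_ξ-Lipschitz function, δ : ℝ^n → (0,1) a continuous function, and g : ℝ^(n-1) → ℝ a function satisfying |g(x̃) − f(x̃, ξ(x̃))| < δ′(x̃) for all x̃, where δ′(x̃) := inf { δ(x̃, y) : y ∈ [ξ(x̃) − L_ξ − 1, ξ(x̃) + L_ξ + 1] }. Regard g as an n-variable function constant in the last coordinate. Then for every x = (x̃, x_n) with dist(x, Γ_ξ) < δ(x) one has |g(x̃) − f(x)| < (1 + L_f(L_ξ + 1))·δ(x). -/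
open Metric

lemma dist_fst_le' {m : ℕ} (x y : EuclideanSpace ℝ (Fin m)) (t s : ℝ) :
    dist x y ≤ dist (mkPt x t) (mkPt y s) := by
  rw [WithLp.prod_dist_eq_of_L2]
  have : dist x y = Real.sqrt (dist x y ^ 2) := by
    rw [Real.sqrt_sq dist_nonneg]
  rw [this]
  apply Real.sqrt_le_sqrt
  simp only [mkPt, WithLp.equiv_symm_apply, WithLp.toLp_fst, WithLp.toLp_snd]
  nlinarith [sq_nonneg (dist t s)]

lemma dist_snd_le' {m : ℕ} (x y : EuclideanSpace ℝ (Fin m)) (t s : ℝ) :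
    |t - s| ≤ dist (mkPt x t) (mkPt y s) := by
  rw [WithLp.prod_dist_eq_of_L2]
  have h : |t - s| = Real.sqrt (dist t s ^ 2) := by
    rw [Real.sqrt_sq dist_nonneg, Real.dist_eq]
  rw [h]
  apply Real.sqrt_le_sqrt
  simp only [mkPt, WithLp.equiv_symm_apply, WithLp.toLp_fst, WithLp.toLp_snd]
  nlinarith [sq_nonneg (dist x y)]

theorem stmt11 {m : ℕ} (Lf Lξ : NNReal)
    (f : WithLp 2 (EuclideanSpace ℝ (Fin m) × ℝ) → ℝ) (hf : LipschitzWith Lf f)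
    (ξ : EuclideanSpace ℝ (Fin m) → ℝ) (hξ : LipschitzWith Lξ ξ)
    (δ : WithLp 2 (EuclideanSpace ℝ (Fin m) × ℝ) → ℝ) (hδc : Continuous δ)
    (hδr : ∀ p, δ p ∈ Set.Ioo (0 : ℝ) 1)
    (g : EuclideanSpace ℝ (Fin m) → ℝ)
    (δ' : EuclideanSpace ℝ (Fin m) → ℝ)
    (hδ' : ∀ x, δ' x = sInf ((fun y => δ (mkPt x y)) ''
        Set.Icc (ξ x - (Lξ : ℝ) - 1) (ξ x + (Lξ : ℝ) + 1)))
    (hg : ∀ x, |g x - f (mkPt x (ξ x))| < δ' x) :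
    ∀ (x : EuclideanSpace ℝ (Fin m)) (t : ℝ),
      infDist (mkPt x t) (graphOf ξ) < δ (mkPt x t) →
      |g x - f (mkPt x t)| < (1 + (Lf : ℝ) * ((Lξ : ℝ) + 1)) * δ (mkPt x t) := by
  intro x t hdist
  set p := mkPt x t with hp
  set d := infDist p (graphOf ξ) with hd
  have hne : (graphOf ξ).Nonempty := ⟨mkPt x (ξ x), x, rfl⟩
  have hδpos := (hδr p).1
  have hδlt1 := (hδr p).2
  have hd0 : 0 ≤ d := infDist_nonneg
  -- key: |t - ξ x| ≤ (Lξ + 1) * d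
  have key : |t - ξ x| ≤ ((Lξ : ℝ) + 1) * d := by
    have hpos : (0:ℝ) < (Lξ : ℝ) + 1 := by positivity
    by_contra hcon
    push_neg at hcon
    have hlt : d < |t - ξ x| / ((Lξ : ℝ) + 1) := by
      rw [lt_div_iff₀ hpos]; linarith [mul_comm ((Lξ:ℝ)+1) d ▸ hcon]
    obtain ⟨q, hqmem, hq⟩ := (infDist_lt_iff hne).1 (hd ▸ hlt)
    obtain ⟨y, rfl⟩ := hqmem
    rw [lt_div_iff₀ hpos] at hq
    have h1 : |t - ξ y| ≤ dist p (mkPt y (ξ y)) := dist_snd_le' x y t (ξ y)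
    have h2 : |ξ y - ξ x| ≤ (Lξ : ℝ) * dist p (mkPt y (ξ y)) := by
      have := hξ.dist_le_mul y x
      rw [Real.dist_eq] at this
      refine this.trans ?_
      have := (dist_fst_le' x y t (ξ y))
      have hLξ : (0:ℝ) ≤ (Lξ : ℝ) := Lξ.coe_nonneg
      rw [dist_comm y x]
      nlinarith
    have h3 : |t - ξ x| ≤ |t - ξ y| + |ξ y - ξ x| := abs_sub_le t (ξ y) (ξ x)
    nlinarith
  have htIcc : t ∈ Set.Icc (ξ x - (Lξ : ℝ) - 1) (ξ x + (Lξ : ℝ) + 1) := by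
    have : |t - ξ x| ≤ (Lξ : ℝ) + 1 := by
      refine key.trans ?_
      have hdle : d ≤ 1 := le_of_lt (hdist.trans hδlt1)
      nlinarith [Lξ.coe_nonneg]
    rw [abs_le] at this
    constructor <;> linarith [this.1, this.2]
  -- δ' x ≤ δ p
  have hδ'le : δ' x ≤ δ p := by
    rw [hδ' x]
    apply csInf_le
    · refine ⟨0, ?_⟩
      rintro v ⟨y, _, rfl⟩
      exact le_of_lt (hδr _).1
    · exact ⟨t, htIcc, rfl⟩
  -- Lipschitz bound on f
  have hfb : |f p - f (mkPt x (ξ x))| ≤ (Lf : ℝ) * ((Lξ : ℝ) + 1) * d := by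
    have h1 := hf.dist_le_mul p (mkPt x (ξ x))
    rw [Real.dist_eq] at h1
    have h2 : dist p (mkPt x (ξ x)) = |t - ξ x| := by
      rw [hp, WithLp.prod_dist_eq_of_L2]
      simp only [mkPt, WithLp.equiv_symm_apply, WithLp.toLp_fst, WithLp.toLp_snd, dist_self]
      rw [Real.dist_eq]
      rw [show (0:ℝ)^2 + |t - ξ x|^2 = |t - ξ x|^2 by ring,
        Real.sqrt_sq (abs_nonneg _)]
    rw [h2] at h1
    refine h1.trans ?_
    have := mul_le_mul_of_nonneg_left key Lf.coe_nonneg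
    nlinarith
  have hga := hg x
  have hlt : (Lf : ℝ) * ((Lξ : ℝ) + 1) * d ≤ (Lf : ℝ) * ((Lξ : ℝ) + 1) * δ p := by
    have : (0:ℝ) ≤ (Lf : ℝ) * ((Lξ : ℝ) + 1) := by positivity
    nlinarith [hdist.le]
  calc |g x - f p| ≤ |g x - f (mkPt x (ξ x))| + |f (mkPt x (ξ x)) - f p| := by
        have := abs_sub_le (g x) (f (mkPt x (ξ x))) (f p); linarith
    _ < δ p + (Lf : ℝ) * ((Lξ : ℝ) + 1) * δ p := by
        rw [abs_sub_comm (f (mkPt x (ξ x)))]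
        have := lt_of_lt_of_le hga hδ'le
        linarith [hfb.trans hlt]
    _ = (1 + (Lf : ℝ) * ((Lξ : ℝ) + 1)) * δ p := by ring
end
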